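/- EC₁ ≡_W RAT ≡_W SORT: the problem EC₁, the rationality problem RAT, and the sorting problem SORT are pairwise continuously Weihrauch equivalent. In fact RAT ≤_sW EC₁ ≤_sW SORT ≤_W RAT. -/

import Mathlib

open Filter Topology

abbrev Baire : Type := ℕ → ℕ

/-- The pairing `⟨p,q⟩(2n) = p(n)`, `⟨p,q⟩(2n+1) = q(n)`. -/
def pairB (p q : Baire) : Baire := fun n => if n % 2 = 0 then p (n / 2) else q (n / 2)

/-- A problem: a partial multivalued function on Baire space. -/
structure Problem where
  dom : Set Baire
  sol : Baire → Set Baire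

/-- Continuous Weihrauch reducibility. -/
def WRed (f g : Problem) : Prop :=
  ∃ (Kd Hd : Set Baire) (K H : Baire → Baire),
    ContinuousOn K Kd ∧ ContinuousOn H Hd ∧
      ∀ p ∈ f.dom, p ∈ Kd ∧ K p ∈ g.dom ∧
        ∀ q ∈ g.sol (K p), pairB p q ∈ Hd ∧ H (pairB p q) ∈ f.sol p

/-- Strong continuous Weihrauch reducibility. -/
def SWRed (f g : Problem) : Prop :=
  ∃ (Kd Hd : Set Baire) (K H : Baire → Baire),
    ContinuousOn K Kd ∧ ContinuousOn H Hd ∧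
      ∀ p ∈ f.dom, p ∈ Kd ∧ K p ∈ g.dom ∧
        ∀ q ∈ g.sol (K p), q ∈ Hd ∧ H q ∈ f.sol p

def WEquiv (f g : Problem) : Prop := WRed f g ∧ WRed g f
def SWEquiv (f g : Problem) : Prop := SWRed f g ∧ SWRed g f
def WLt (f g : Problem) : Prop := WRed f g ∧ ¬ WRed g f

/-- `range(p-1)`. -/
def rangeM (p : Baire) : Set ℕ := {n | ∃ i, p i = n + 1}

/-- Characteristic function of a set of naturals. -/
noncomputable def chi (A : Set ℕ) : Baire := A.indicator fun _ => 1

noncomputable def EC : Problem where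
  dom := Set.univ
  sol := fun p => {chi (rangeM p)}

noncomputable def EC1 : Problem where
  dom := {p | ((rangeM p)ᶜ).encard ≤ 1}
  sol := fun p => {chi (rangeM p)}

def pfst (r : Baire) : Baire := fun n => r (2 * n)
def psnd (r : Baire) : Baire := fun n => r (2 * n + 1)

noncomputable def SEP : Problem where
  dom := {r | rangeM (pfst r) ∩ rangeM (psnd r) = ∅}
  sol := fun r =>
    {s | ∃ A : Set ℕ, s = chi A ∧ rangeM (pfst r) ⊆ A ∧ A ⊆ (rangeM (psnd r))ᶜ}

noncomputable def SEP1 : Problem where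
  dom := {r | rangeM (pfst r) ∩ rangeM (psnd r) = ∅ ∧
    ((rangeM (pfst r) ∪ rangeM (psnd r))ᶜ).encard ≤ 1}
  sol := SEP.sol

/- rationals -/
def ratEnum (i : ℕ) : ℚ :=
  ((i.unpair.1 : ℚ) - (i.unpair.2.unpair.1 : ℚ)) / ((i.unpair.2.unpair.2 : ℚ) + 1)

def rhoCauchy (p : Baire) (x : ℝ) : Prop :=
  ∀ n, |(ratEnum (p n) : ℝ) - x| ≤ (2 : ℝ) ^ (-(n : ℤ))

def rhoNaive (p : Baire) (x : ℝ) : Prop :=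
  Tendsto (fun n => ((ratEnum (p n) : ℝ))) atTop (nhds x)

def rhoLt (p : Baire) (x : ℝ) : Prop := rangeM p = {n | (ratEnum n : ℝ) < x}
def rhoGt (p : Baire) (x : ℝ) : Prop := rangeM p = {n | x < (ratEnum n : ℝ)}

def rhoCfLt (p : Baire) (x : ℝ) : Prop :=
  (∀ n, p n ≤ 1) ∧ ∀ n, (p n = 1 ↔ (ratEnum n : ℝ) < x)
def rhoCfGt (p : Baire) (x : ℝ) : Prop :=
  (∀ n, p n ≤ 1) ∧ ∀ n, (p n = 1 ↔ x < (ratEnum n : ℝ))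

noncomputable def cfTail : List ℕ → ℝ
  | [] => 0
  | b :: l => 1 / ((b : ℝ) + cfTail l)

noncomputable def cfApprox (p : Baire) (k : ℕ) : ℝ :=
  ((Denumerable.ofNat ℤ (p 0) : ℤ) : ℝ) + cfTail ((List.range k).map fun i => p (i + 1))

def rhoCf (p : Baire) (x : ℝ) : Prop :=
  ((∀ i, 1 ≤ i → 1 ≤ p i) ∧ Tendsto (cfApprox p) atTop (nhds x)) ∨
    (∃ k, 1 ≤ k ∧ p k = 0 ∧ (∀ i, 1 ≤ i → i < k → 1 ≤ p i) ∧
      (2 ≤ k → 2 ≤ p (k - 1)) ∧ x = cfApprox p (k - 1))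

def rhoDec (p : Baire) (x : ℝ) : Prop :=
  (∀ n, 1 ≤ n → p n ≤ 9) ∧
    x = ((Denumerable.ofNat ℤ (p 0) : ℤ) : ℝ) + ∑' n : ℕ, (p (n + 1) : ℝ) / 10 ^ (n + 1)

/-- The implication problem between two representations of ℝ. -/
def implProblem (d1 d2 : Baire → ℝ → Prop) : Problem where
  dom := {p | ∃ x, d1 p x}
  sol := fun p => {q | ∃ x, d1 p x ∧ d2 q x}

/- trees / WKL / choice on Cantor space -/
def wordCode : List Bool → ℕ
  | [] => 0
  | b :: w => 2 * wordCode w + (if b then 2 else 1)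

def prefixList (x : Baire) (k : ℕ) : List Bool := (List.range k).map fun i => decide (x i = 1)

def isTreeCode (t : Baire) : Prop :=
  (∀ n, t n ≤ 1) ∧
    ∀ w v : List Bool, w <+: v → t (wordCode v) = 1 → t (wordCode w) = 1

def WKL : Problem where
  dom := {t | isTreeCode t ∧ {w : List Bool | t (wordCode w) = 1}.Infinite}
  sol := fun t => {x | (∀ n, x n ≤ 1) ∧ ∀ k, t (wordCode (prefixList x k)) = 1}

def Ap (p : Baire) : Set Baire :=
  {x | (∀ n, x n ≤ 1) ∧ ∀ k, wordCode (prefixList x k) ∉ rangeM p}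

def CCantor : Problem where
  dom := {p | (Ap p).Nonempty}
  sol := Ap

def Cle2 : Problem where
  dom := {p | (Ap p).Nonempty ∧ (Ap p).encard ≤ 2}
  sol := Ap

/- limit and parallelization -/
def projCount (r : Baire) (n : ℕ) : Baire := fun k => r (Nat.pair n k)

def limP : Problem where
  dom := {r | ∃ q : Baire, ∀ k, Tendsto (fun n => projCount r n k) atTop (nhds (q k))}
  sol := fun r => {q | ∀ k, Tendsto (fun n => projCount r n k) atTop (nhds (q k))}

def parallel (f : Problem) : Problem where
  dom := {r | ∀ n, projCount r n ∈ f.dom}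
  sol := fun r => {s | ∀ n, projCount s n ∈ f.sol (projCount r n)}

def MCT : Problem where
  dom := {r | ∃ xs : ℕ → ℝ, (∀ n, rhoCauchy (projCount r n) (xs n)) ∧
    Monotone xs ∧ BddAbove (Set.range xs)}
  sol := fun r => {q | ∃ xs : ℕ → ℝ, (∀ n, rhoCauchy (projCount r n) (xs n)) ∧
    Monotone xs ∧ BddAbove (Set.range xs) ∧ rhoCauchy q (⨆ n, xs n)}

/- SORT and RAT -/
open Classical in
noncomputable def sortOut (p : Baire) : Baire := fun k =>
  if {i | p i = 0}.Infinite then 0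
  else if k < {i | p i = 0}.ncard then 0 else 1

noncomputable def SORT : Problem where
  dom := {p | ∀ n, p n ≤ 1}
  sol := fun p => {sortOut p}

def znk (n : ℕ) : Baire := fun k => if k < n then 0 else 1

def RAT : Problem where
  dom := {p | ∃ x, rhoCauchy p x}
  sol := fun p => {s | ∃ x, rhoCauchy p x ∧
    ((∃ n, x = (ratEnum n : ℝ) ∧ s = znk n) ∨
      ((∀ r : ℚ, x ≠ (r : ℝ)) ∧ s = fun _ => 0))}

/- omniscience principles -/
def projFin (m i : ℕ) (r : Baire) : Baire := fun k => r (m * k + i - 1)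
def isZeroSeq (p : Baire) : Prop := ∀ k, p k = 0
def constSeq (i : ℕ) : Baire := fun _ => i

noncomputable def LPOn (n : ℕ) : Problem where
  dom := Set.univ
  sol := fun r => {constSeq ({i | 1 ≤ i ∧ i ≤ n ∧ isZeroSeq (projFin n i r)}.ncard)}

def LLPOn (n : ℕ) : Problem where
  dom := {r | {i | 1 ≤ i ∧ i ≤ n ∧ ¬ isZeroSeq (projFin n i r)}.encard ≤ 1}
  sol := fun r => {s | ∃ i, 1 ≤ i ∧ i ≤ n ∧ isZeroSeq (projFin n i r) ∧ s = constSeq i}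

def MLPOn (n : ℕ) : Problem where
  dom := {r | ∃ i, 1 ≤ i ∧ i ≤ n ∧ isZeroSeq (projFin n i r)}
  sol := fun r => {s | ∃ i, 1 ≤ i ∧ i ≤ n ∧ isZeroSeq (projFin n i r) ∧ s = constSeq i}

def LPO : Problem where
  dom := Set.univ
  sol := fun p => {s | (isZeroSeq p ∧ s = constSeq 1) ∨ (¬ isZeroSeq p ∧ s = constSeq 0)}

/- choice problems on ℕ etc. -/
def Cfin (n : ℕ) : Problem where
  dom := {p | ∃ i, i < n ∧ i ∉ rangeM p}
  sol := fun p => {s | ∃ i, i < n ∧ i ∉ rangeM p ∧ s = constSeq i}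

def ACCfin (n : ℕ) : Problem where
  dom := {p | (∃ i, i < n ∧ i ∉ rangeM p) ∧ ({i | i < n} ∩ rangeM p).encard ≤ 1}
  sol := (Cfin n).sol

def CNat : Problem where
  dom := {p | ∃ i, i ∉ rangeM p}
  sol := fun p => {s | ∃ i, i ∉ rangeM p ∧ s = constSeq i}

/- differentiation -/
instance : Countable (AddMonoidAlgebra ℚ ℕ) :=
  Function.Injective.countable (f := AddMonoidAlgebra.coeff)
    (fun a b h => by cases a; cases b; cases h; rfl)

instance : Countable (Polynomial ℚ) :=
  Polynomial.toFinsupp_injective.countable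

noncomputable def polyEnum : ℕ → Polynomial ℚ :=
  (exists_surjective_nat (Polynomial ℚ)).choose

noncomputable def polyFun (k : ℕ) : C(Set.Icc (0:ℝ) 1, ℝ) :=
  ⟨fun x => ((polyEnum k).map (algebraMap ℚ ℝ)).eval (x : ℝ),
   (((polyEnum k).map (algebraMap ℚ ℝ)).continuous).comp continuous_subtype_val⟩

noncomputable def deltaC (p : Baire) (f : C(Set.Icc (0:ℝ) 1, ℝ)) : Prop :=
  ∀ n, ‖f - polyFun (p n)‖ ≤ (2 : ℝ) ^ (-(n : ℤ))

def IsDerivOn (f g : C(Set.Icc (0:ℝ) 1, ℝ)) : Prop :=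
  ∀ x : Set.Icc (0:ℝ) 1,
    HasDerivWithinAt (Set.IccExtend (by norm_num : (0:ℝ) ≤ 1) f) (g x) (Set.Icc 0 1) (x : ℝ)

noncomputable def diffP : Problem where
  dom := {p | ∃ f g, deltaC p f ∧ IsDerivOn f g}
  sol := fun p => {q | ∃ f g, deltaC p f ∧ IsDerivOn f g ∧ deltaC q g}

-- INFRA
lemma half_pow (n : ℕ) : (2:ℝ)^(-(n:ℤ)) = (1/2)^n := by
  rw [zpow_neg, zpow_natCast, one_div, ← inv_pow]

lemma pfst_pairB (p q : Baire) : pfst (pairB p q) = p := by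
  funext n; simp [pfst, pairB, Nat.mul_mod_right, Nat.mul_div_cancel_left]

lemma psnd_pairB (p q : Baire) : psnd (pairB p q) = q := by
  funext n
  have h2 : (2*n+1)/2 = n := by omega
  simp [psnd, pairB, Nat.mul_add_mod, h2]

lemma continuous_pfst : Continuous pfst :=
  continuous_pi fun n => continuous_apply (2*n)

lemma continuous_psnd : Continuous psnd :=
  continuous_pi fun n => continuous_apply (2*n+1)

/-- locally-determined maps are continuous on a set -/
lemma continuousOn_of_locally {H : Baire → Baire} {s : Set Baire}
    (h : ∀ r ∈ s, ∀ n, ∃ k, ∀ r' ∈ s, (∀ j < k, r' j = r j) → H r' n = H r n) :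
    ContinuousOn H s := by
  intro r hr
  rw [ContinuousWithinAt, tendsto_pi_nhds]
  intro n
  obtain ⟨k, hk⟩ := h r hr n
  have hU : IsOpen {r' : Baire | ∀ j < k, r' j = r j} := by
    have : {r' : Baire | ∀ j < k, r' j = r j} = ⋂ j : Fin k, {r' | r' j.1 = r j.1} := by
      ext r'; simp [Fin.forall_iff]
    rw [this]
    refine isOpen_iInter_of_finite fun j => ?_
    have : {r' : Baire | r' j.1 = r j.1} = (fun p : Baire => p j.1) ⁻¹' {r j.1} := by
      ext r'; simp
    rw [this]
    exact IsOpen.preimage (continuous_apply (j.1 : ℕ)) (isOpen_discrete ({r j.1} : Set ℕ))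
  have hev : ∀ᶠ r' in nhdsWithin r s, H r' n = H r n := by
    filter_upwards [mem_nhdsWithin_of_mem_nhds (hU.mem_nhds (by intro j _; rfl)),
      self_mem_nhdsWithin] with r' h1 h2
    exact hk r' h2 h1
  exact Tendsto.congr' (hev.mono fun r' e => e.symm) tendsto_const_nhds

lemma continuous_of_locally {H : Baire → Baire}
    (h : ∀ n, ∃ k, ∀ r r' : Baire, (∀ j < k, r' j = r j) → H r' n = H r n) :
    Continuous H := by
  rw [← continuousOn_univ]
  exact continuousOn_of_locally fun r _ n => (h n).imp fun k hk => fun r' _ hj => hk r r' hj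

lemma SWRed.toW {f g : Problem} (h : SWRed f g) : WRed f g := by
  obtain ⟨Kd, Hd, K, H, hK, hH, hred⟩ := h
  refine ⟨Kd, psnd ⁻¹' Hd, K, H ∘ psnd,
    hK, hH.comp continuous_psnd.continuousOn (Set.mapsTo_preimage _ _), ?_⟩
  intro p hp
  obtain ⟨h1, h2, h3⟩ := hred p hp
  refine ⟨h1, h2, fun q hq => ?_⟩
  have := h3 q hq
  simpa [Set.mem_preimage, psnd_pairB] using this

lemma continuousOn_pairB_comp {A B : Baire → Baire} {s : Set Baire}
    (hA : ContinuousOn A s) (hB : ContinuousOn B s) :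
    ContinuousOn (fun r => pairB (A r) (B r)) s := by
  apply continuousOn_pi.2
  intro n
  by_cases h : n % 2 = 0
  · have : (fun r => pairB (A r) (B r) n) = fun r => A r (n/2) := by
      funext r; simp [pairB, h]
    rw [this]
    exact (continuous_apply (n/2)).comp_continuousOn hA
  · have : (fun r => pairB (A r) (B r) n) = fun r => B r (n/2) := by
      funext r; simp [pairB, h]
    rw [this]
    exact (continuous_apply (n/2)).comp_continuousOn hB

lemma WRed.trans {f g h : Problem} (h1 : WRed f g) (h2 : WRed g h) : WRed f h := by
  obtain ⟨Kd1, Hd1, K1, H1, hK1, hH1, hr1⟩ := h1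
  obtain ⟨Kd2, Hd2, K2, H2, hK2, hH2, hr2⟩ := h2
  refine ⟨Kd1 ∩ K1 ⁻¹' Kd2,
    {r | pfst r ∈ Kd1 ∧ pairB (K1 (pfst r)) (psnd r) ∈ Hd2 ∧
      pairB (pfst r) (H2 (pairB (K1 (pfst r)) (psnd r))) ∈ Hd1},
    K2 ∘ K1,
    fun r => H1 (pairB (pfst r) (H2 (pairB (K1 (pfst r)) (psnd r)))), ?_, ?_, ?_⟩
  · exact hK2.comp (hK1.mono Set.inter_subset_left) fun x hx => hx.2
  · have hinner : ContinuousOn (fun r => pairB (K1 (pfst r)) (psnd r))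
        {r : Baire | pfst r ∈ Kd1 ∧ pairB (K1 (pfst r)) (psnd r) ∈ Hd2 ∧
          pairB (pfst r) (H2 (pairB (K1 (pfst r)) (psnd r))) ∈ Hd1} := by
      apply continuousOn_pairB_comp
      · exact hK1.comp continuous_pfst.continuousOn fun x hx => hx.1
      · exact continuous_psnd.continuousOn
    have houter : ContinuousOn (fun r => pairB (pfst r) (H2 (pairB (K1 (pfst r)) (psnd r))))
        {r : Baire | pfst r ∈ Kd1 ∧ pairB (K1 (pfst r)) (psnd r) ∈ Hd2 ∧
          pairB (pfst r) (H2 (pairB (K1 (pfst r)) (psnd r))) ∈ Hd1} := by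
      apply continuousOn_pairB_comp continuous_pfst.continuousOn
      exact hH2.comp hinner fun x hx => hx.2.1
    exact hH1.comp houter fun x hx => hx.2.2
  · intro p hp
    obtain ⟨hp1, hg, hs1⟩ := hr1 p hp
    obtain ⟨hp2, hh, hs2⟩ := hr2 (K1 p) hg
    refine ⟨⟨hp1, hp2⟩, hh, fun q hq => ?_⟩
    obtain ⟨hq2, hsol2⟩ := hs2 q hq
    obtain ⟨hq1, hsol1⟩ := hs1 (H2 (pairB (K1 p) q)) hsol2
    exact ⟨⟨by simpa [pfst_pairB], by simpa [pfst_pairB, psnd_pairB], by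
      simpa [pfst_pairB, psnd_pairB]⟩, by simpa [pfst_pairB, psnd_pairB]⟩

-- BLOCK 2 : RAT ≤sW EC1
lemma ratEnum_surjective : Function.Surjective ratEnum := by
  intro r
  have hd1 : (1:ℕ) ≤ r.den := r.den_pos
  have hden : ((r.den - 1 : ℕ) : ℚ) + 1 = (r.den : ℚ) := by
    rw [Nat.cast_sub hd1]; ring
  rcases le_or_gt 0 r.num with h | h
  · refine ⟨Nat.pair r.num.toNat (Nat.pair 0 (r.den - 1)), ?_⟩
    have h1 : ((r.num.toNat : ℕ) : ℚ) = (r.num : ℚ) := by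
      exact_mod_cast congrArg (fun z : ℤ => (z : ℚ)) (Int.toNat_of_nonneg h)
    simp only [ratEnum, Nat.unpair_pair, h1, Nat.cast_zero, sub_zero, hden]
    exact Rat.num_div_den r
  · refine ⟨Nat.pair 0 (Nat.pair (-r.num).toNat (r.den - 1)), ?_⟩
    have h1 : (((-r.num).toNat : ℕ) : ℚ) = -(r.num : ℚ) := by
      exact_mod_cast congrArg (fun z : ℤ => (z : ℚ)) (Int.toNat_of_nonneg (by omega))
    simp only [ratEnum, Nat.unpair_pair, h1, Nat.cast_zero, zero_sub, neg_neg, hden]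
    exact Rat.num_div_den r

noncomputable def encodeQ (u : ℚ) : ℕ := (ratEnum_surjective u).choose

lemma encodeQ_spec (u : ℚ) : ratEnum (encodeQ u) = u := (ratEnum_surjective u).choose_spec

lemma rhoCauchy_unique {p : Baire} {x y : ℝ} (hx : rhoCauchy p x) (hy : rhoCauchy p y) :
    x = y := by
  by_contra hne
  have hpos : 0 < |x - y| / 2 := by
    have := abs_pos.2 (sub_ne_zero.2 hne); linarith
  obtain ⟨s, hs⟩ := exists_pow_lt_of_lt_one hpos (by norm_num : (1/2 : ℝ) < 1)
  have h1 := hx s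
  have h2 := hy s
  rw [half_pow] at h1 h2
  have htri := abs_sub_le x (ratEnum (p s) : ℝ) y
  have e1 : |x - (ratEnum (p s) : ℝ)| = |(ratEnum (p s) : ℝ) - x| := abs_sub_comm _ _
  linarith

lemma chi_mem {A : Set ℕ} {n : ℕ} (h : n ∈ A) : chi A n = 1 := by
  simp [chi, Set.indicator_apply, h]

lemma chi_not_mem {A : Set ℕ} {n : ℕ} (h : n ∉ A) : chi A n = 0 := by
  simp [chi, Set.indicator_apply, h]

open Classical in
noncomputable def Krat (p : Baire) : Baire := fun m =>
  if (∃ m' < m.unpair.1, ratEnum m' = ratEnum m.unpair.1) ∨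
      ((1/2 : ℚ) ^ m.unpair.2 < |ratEnum m.unpair.1 - ratEnum (p m.unpair.2)|)
  then m.unpair.1 + 1 else 0

open Classical in
noncomputable def Hrat (q : Baire) : Baire := fun n => if ∀ j ≤ n, q j = 1 then 0 else 1

lemma mem_rangeM_Krat (p : Baire) (n : ℕ) :
    n ∈ rangeM (Krat p) ↔ ∃ s, (∃ m' < n, ratEnum m' = ratEnum n) ∨
      ((1/2 : ℚ) ^ s < |ratEnum n - ratEnum (p s)|) := by
  constructor
  · rintro ⟨i, hi⟩
    unfold Krat at hi
    split_ifs at hi with h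
    all_goals first
      | (have h1 : i.unpair.1 = n := by omega
         exact ⟨i.unpair.2, h1 ▸ h⟩)
      | omega
  · rintro ⟨s, hs⟩
    refine ⟨Nat.pair n s, ?_⟩
    unfold Krat
    rw [Nat.unpair_pair]
    simp only [hs, if_true]

lemma continuous_Krat : Continuous Krat := by
  apply continuous_of_locally
  intro m
  refine ⟨m + 1, fun p p' h => ?_⟩
  unfold Krat
  rw [h _ (Nat.lt_succ_of_le (Nat.unpair_right_le m))]

lemma continuous_Hrat : Continuous Hrat :=
  continuous_of_locally fun n => ⟨n + 1, fun q q' h => by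
    unfold Hrat
    have : (∀ j ≤ n, q' j = 1) ↔ (∀ j ≤ n, q j = 1) := by
      constructor <;> intro hh j hj
      · rw [← h j (by omega)]; exact hh j hj
      · rw [h j (by omega)]; exact hh j hj
    simp only [this]⟩

lemma Krat_notmem {p : Baire} {x : ℝ} (hx : rhoCauchy p x) {n : ℕ}
    (hn : ((ratEnum n : ℚ) : ℝ) = x) (hmin : ∀ m' < n, ratEnum m' ≠ ratEnum n) :
    n ∉ rangeM (Krat p) := by
  rw [mem_rangeM_Krat]
  rintro ⟨s, h | h⟩
  · obtain ⟨m', hm', he⟩ := h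
    exact hmin m' hm' he
  · have hxs := hx s
    rw [half_pow] at hxs
    have hlt : ((1/2 : ℝ)) ^ s < |((ratEnum n : ℚ) : ℝ) - ((ratEnum (p s) : ℚ) : ℝ)| := by
      have := (Rat.cast_lt (K := ℝ)).2 h
      push_cast at this
      convert this using 2 <;> norm_num
    rw [hn] at hlt
    have : |x - ((ratEnum (p s) : ℚ) : ℝ)| = |((ratEnum (p s) : ℚ) : ℝ) - x| :=
      abs_sub_comm _ _
    linarith [hlt, hxs, this ▸ hlt]

lemma Krat_mem_of_ne {p : Baire} {x : ℝ} (hx : rhoCauchy p x) {n : ℕ}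
    (hn : ((ratEnum n : ℚ) : ℝ) ≠ x) : n ∈ rangeM (Krat p) := by
  rw [mem_rangeM_Krat]
  have hpos : 0 < |((ratEnum n : ℚ) : ℝ) - x| / 2 := by
    have := abs_pos.2 (sub_ne_zero.2 hn); linarith
  obtain ⟨s, hs⟩ := exists_pow_lt_of_lt_one hpos (by norm_num : (1/2 : ℝ) < 1)
  refine ⟨s, Or.inr ?_⟩
  have hxs := hx s
  rw [half_pow] at hxs
  have htri := abs_sub_le ((ratEnum n : ℚ) : ℝ) ((ratEnum (p s) : ℚ) : ℝ) x
  have hreal : ((1/2 : ℝ)) ^ s < |((ratEnum n : ℚ) : ℝ) - ((ratEnum (p s) : ℚ) : ℝ)| := by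
    have e1 : |((ratEnum (p s) : ℚ) : ℝ) - x| = |x - ((ratEnum (p s) : ℚ) : ℝ)| :=
      abs_sub_comm _ _
    linarith [htri, e1 ▸ hxs]
  have : ((1/2 : ℚ) ^ s : ℝ) < ((|ratEnum n - ratEnum (p s)| : ℚ) : ℝ) := by
    push_cast
    convert hreal using 2 <;> norm_num
  exact_mod_cast this

lemma Krat_mem_of_notmin {p : Baire} {n : ℕ} (m' : ℕ) (hm' : m' < n)
    (he : ratEnum m' = ratEnum n) : n ∈ rangeM (Krat p) := by
  rw [mem_rangeM_Krat]
  exact ⟨0, Or.inl ⟨m', hm', he⟩⟩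

lemma RAT_sw_EC1 : SWRed RAT EC1 := by
  refine ⟨Set.univ, Set.univ, Krat, Hrat, continuous_Krat.continuousOn,
    continuous_Hrat.continuousOn, ?_⟩
  rintro p ⟨x, hx⟩
  by_cases hrat : ∃ n, ((ratEnum n : ℚ) : ℝ) = x
  · classical
    set n₀ := Nat.find hrat with hn₀def
    have hn₀ : ((ratEnum n₀ : ℚ) : ℝ) = x := Nat.find_spec hrat
    have hmin : ∀ m' < n₀, ratEnum m' ≠ ratEnum n₀ := by
      intro m' hm' he
      exact Nat.find_min hrat hm' (by rw [← hn₀, he])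
    have hnotmem : n₀ ∉ rangeM (Krat p) := Krat_notmem hx hn₀ hmin
    have hmem : ∀ n, n ≠ n₀ → n ∈ rangeM (Krat p) := by
      intro n hne
      by_cases h : ((ratEnum n : ℚ) : ℝ) = x
      · have : n₀ < n := by
          rcases lt_trichotomy n n₀ with h1 | h1 | h1
          · exact absurd h (Nat.find_min hrat h1)
          · exact absurd h1 hne
          · exact h1
        exact Krat_mem_of_notmin n₀ this (by
          have : ((ratEnum n₀ : ℚ) : ℝ) = ((ratEnum n : ℚ) : ℝ) := by rw [hn₀, h]
          exact_mod_cast this)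
      · exact Krat_mem_of_ne hx h
    have hcompl : (rangeM (Krat p))ᶜ = {n₀} := by
      ext n
      simp only [Set.mem_compl_iff, Set.mem_singleton_iff]
      constructor
      · intro h; by_contra hne; exact h (hmem n hne)
      · intro h; rw [h]; exact hnotmem
    refine ⟨trivial, ?_, ?_⟩
    · show ((rangeM (Krat p))ᶜ).encard ≤ 1
      rw [hcompl, Set.encard_singleton]
    · intro q hq
      have hq' : q = chi (rangeM (Krat p)) := hq
      refine ⟨trivial, x, hx, Or.inl ⟨n₀, hn₀.symm, ?_⟩⟩
      funext k
      rw [hq']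
      unfold Hrat znk
      by_cases hk : k < n₀
      · rw [if_pos, if_pos hk]
        intro j hj
        exact chi_mem (hmem j (by omega))
      · rw [if_neg, if_neg hk]
        intro hall
        have := hall n₀ (by omega)
        rw [chi_not_mem hnotmem] at this
        omega
  · push_neg at hrat
    have hmem : ∀ n, n ∈ rangeM (Krat p) := fun n => Krat_mem_of_ne hx (hrat n)
    refine ⟨trivial, ?_, ?_⟩
    · show ((rangeM (Krat p))ᶜ).encard ≤ 1
      have : (rangeM (Krat p))ᶜ = ∅ := by
        ext n; simp [hmem n]
      rw [this, Set.encard_empty]; exact zero_le_one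
    · intro q hq
      have hq' : q = chi (rangeM (Krat p)) := hq
      refine ⟨trivial, x, hx, Or.inr ⟨?_, ?_⟩⟩
      · intro r hr
        obtain ⟨n, hn⟩ := ratEnum_surjective r
        exact hrat n (by rw [hn, ← hr])
      · funext k
        rw [hq']
        unfold Hrat
        rw [if_pos]
        intro j _
        exact chi_mem (hmem j)

-- BLOCK 3 : EC1 ≤sW SORT
lemma exists_notin_prefix (p : Baire) (s : ℕ) : ∃ n, ∀ i ≤ s, p i ≠ n + 1 := by
  have hfin : {n | ∃ i ≤ s, p i = n + 1}.Finite := by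
    apply Set.Finite.subset ((Set.finite_Iic s).image (fun i => p i - 1))
    rintro n ⟨i, hi, he⟩
    refine ⟨i, hi, ?_⟩
    show p i - 1 = n
    omega
  obtain ⟨n, hn⟩ := hfin.infinite_compl.nonempty
  exact ⟨n, fun i hi he => hn ⟨i, hi, he⟩⟩

noncomputable def mS (p : Baire) (s : ℕ) : ℕ := Nat.find (exists_notin_prefix p s)

lemma mS_spec (p : Baire) (s : ℕ) : ∀ i ≤ s, p i ≠ mS p s + 1 :=
  Nat.find_spec (exists_notin_prefix p s)

lemma mS_le (p : Baire) (s : ℕ) {n : ℕ} (h : ∀ i ≤ s, p i ≠ n + 1) : mS p s ≤ n :=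
  Nat.find_le h

lemma mS_min (p : Baire) (s : ℕ) {n : ℕ} (h : n < mS p s) : ∃ i ≤ s, p i = n + 1 := by
  have := Nat.find_min (exists_notin_prefix p s) h
  push_neg at this
  exact this

lemma mS_mono (p : Baire) : Monotone (mS p) := by
  intro s t hst
  exact Nat.find_mono (fun n hn i hi => hn i (le_trans hi hst))

lemma mS_congr {p p' : Baire} {s : ℕ} (h : ∀ i ≤ s, p' i = p i) : mS p' s = mS p s := by
  apply le_antisymm
  · exact mS_le p' s (fun i hi => (h i hi) ▸ mS_spec p s i hi)
  · exact mS_le p s (fun i hi => (h i hi) ▸ mS_spec p' s i hi)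

noncomputable def wS (p : Baire) : ℕ → ℕ
  | 0 => 0
  | s + 1 => if wS p s < mS p (s+1) then wS p s + 1 else wS p s

lemma wS_succ (p : Baire) (s : ℕ) :
    wS p (s+1) = if wS p s < mS p (s+1) then wS p s + 1 else wS p s := rfl

lemma wS_mono (p : Baire) : Monotone (wS p) := by
  apply monotone_nat_of_le_succ
  intro s
  rw [wS_succ]
  split <;> omega

lemma wS_le_mS (p : Baire) (s : ℕ) : wS p s ≤ mS p s := by
  induction s with
  | zero => exact Nat.zero_le _
  | succ s ih =>
      rw [wS_succ]
      have := mS_mono p (show s ≤ s + 1 by omega)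
      split <;> omega

lemma wS_congr {p p' : Baire} {s : ℕ} (h : ∀ i ≤ s, p' i = p i) :
    ∀ t ≤ s, wS p' t = wS p t := by
  intro t ht
  induction t with
  | zero => rfl
  | succ t ih =>
      rw [wS_succ, wS_succ, ih (by omega),
        mS_congr (fun i hi => h i (le_trans hi ht))]

noncomputable def Ksort (p : Baire) : Baire := fun s =>
  match s with
  | 0 => 0
  | s + 1 => if wS p s < wS p (s+1) then 0 else 1

lemma continuous_Ksort : Continuous Ksort := by
  apply continuous_of_locally
  intro s
  refine ⟨s + 1, fun p p' h => ?_⟩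
  match s with
  | 0 => rfl
  | s + 1 =>
      show (if wS p' s < wS p' (s+1) then 0 else 1) = (if wS p s < wS p (s+1) then 0 else 1)
      have hc := wS_congr (p := p) (p' := p') (s := s+1) (fun i hi => h i (by omega))
      rw [hc s (by omega), hc (s+1) (le_refl _)]

lemma Ksort_le_one (p : Baire) (s : ℕ) : Ksort p s ≤ 1 := by
  match s with
  | 0 => exact Nat.zero_le _
  | s + 1 => show (if _ then 0 else 1) ≤ 1; split <;> omega

lemma Ksort_zeros_card (p : Baire) (T : ℕ) :
    ((Finset.range (T+1)).filter (fun s => Ksort p s = 0)).card = wS p T + 1 := by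
  induction T with
  | zero =>
      rw [Finset.range_one, Finset.filter_singleton,
        if_pos (show Ksort p 0 = 0 from rfl)]
      rfl
  | succ T ih =>
      have h4 : wS p (T+1) = wS p T + 1 ∨ wS p (T+1) = wS p T := by
        rw [wS_succ]; split
        · exact Or.inl rfl
        · exact Or.inr rfl
      have hstep : (Finset.range (T+1+1)).filter (fun s => Ksort p s = 0) =
          if Ksort p (T+1) = 0 then
            insert (T+1) ((Finset.range (T+1)).filter (fun s => Ksort p s = 0))
          else (Finset.range (T+1)).filter (fun s => Ksort p s = 0) := by
        rw [Finset.range_add_one, Finset.filter_insert]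
      rw [hstep]
      by_cases h2 : wS p T < wS p (T+1)
      · have hzero : Ksort p (T+1) = 0 := by
          show (if wS p T < wS p (T+1) then 0 else 1) = 0
          rw [if_pos h2]
        rw [if_pos hzero, Finset.card_insert_of_notMem (by simp), ih]
        omega
      · have hone : Ksort p (T+1) = 1 := by
          show (if wS p T < wS p (T+1) then 0 else 1) = 1
          rw [if_neg h2]
        rw [if_neg (by omega), ih]
        omega

/-- finite-complement case: `mS` converges to `n₀`. -/
lemma mS_eventually {p : Baire} {n₀ : ℕ} (hc : (rangeM p)ᶜ = {n₀}) :
    ∃ S, ∀ s, S ≤ s → mS p s = n₀ := by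
  have hnot : ∀ i, p i ≠ n₀ + 1 := by
    intro i hi
    have : n₀ ∈ rangeM p := ⟨i, hi⟩
    have h2 : n₀ ∈ (rangeM p)ᶜ := hc ▸ rfl
    exact h2 this
  have hmem : ∀ n < n₀, n ∈ rangeM p := by
    intro n hn
    by_contra h
    have h2 : n ∈ (rangeM p)ᶜ := h
    rw [hc] at h2
    have h3 : n = n₀ := h2
    omega
  classical
  let wit : ℕ → ℕ := fun n => if h : n < n₀ then (hmem n h).choose else 0
  have hwit : ∀ n < n₀, p (wit n) = n + 1 := by
    intro n hn
    simp only [wit, dif_pos hn]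
    exact (hmem n hn).choose_spec
  refine ⟨(Finset.range n₀).sup wit, fun s hs => ?_⟩
  apply le_antisymm
  · exact mS_le p s (fun i _ => hnot i)
  · by_contra h
    push_neg at h
    have hw : wit (mS p s) ≤ s :=
      le_trans (Finset.le_sup (Finset.mem_range.2 h)) hs
    exact mS_spec p s (wit (mS p s)) hw (hwit (mS p s) h)

lemma wS_eventually {p : Baire} {n₀ : ℕ} (hc : (rangeM p)ᶜ = {n₀}) :
    ∃ S', ∀ s, S' ≤ s → wS p s = n₀ := by
  obtain ⟨S, hS⟩ := mS_eventually hc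
  have hub : ∀ s, S ≤ s → wS p s ≤ n₀ := by
    intro s hs
    calc wS p s ≤ mS p s := wS_le_mS p s
    _ = n₀ := hS s hs
  have hstep : ∀ k, n₀ ≤ wS p (S + k) ∨ wS p (S + k) = wS p S + k := by
    intro k
    induction k with
    | zero => exact Or.inr rfl
    | succ k ih =>
        rcases ih with h | h
        · exact Or.inl (le_trans h (wS_mono p (by omega)))
        · by_cases h2 : n₀ ≤ wS p (S + k)
          · exact Or.inl (le_trans h2 (wS_mono p (by omega)))
          · right
            have he : S + (k + 1) = (S + k) + 1 := by omega
            rw [he, wS_succ, if_pos (by rw [hS ((S + k) + 1) (by omega)]; omega)]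
            omega
  refine ⟨S + n₀, fun s hs => ?_⟩
  have h1 : wS p (S + n₀) = n₀ := by
    rcases hstep n₀ with h | h
    · exact le_antisymm (hub _ (by omega)) h
    · have := hub (S + n₀) (by omega)
      omega
  have h2 := wS_mono p hs
  have h3 := hub s (by omega)
  omega

/-- infinite case: `mS` is unbounded. -/
lemma mS_unbounded {p : Baire} (hall : ∀ n, n ∈ rangeM p) (B : ℕ) :
    ∃ S, ∀ s, S ≤ s → B < mS p s := by
  have hc : (rangeM p)ᶜ = (∅ : Set ℕ) := by
    ext n; simp [hall n]
  classical
  let wit : ℕ → ℕ := fun n => (hall n).choose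
  have hwit : ∀ n, p (wit n) = n + 1 := fun n => (hall n).choose_spec
  refine ⟨(Finset.range (B+1)).sup wit, fun s hs => ?_⟩
  by_contra h
  push_neg at h
  have hw : wit (mS p s) ≤ s :=
    le_trans (Finset.le_sup (Finset.mem_range.2 (by omega))) hs
  exact mS_spec p s (wit (mS p s)) hw (hwit (mS p s))

lemma wS_unbounded {p : Baire} (hall : ∀ n, n ∈ rangeM p) (B : ℕ) :
    ∃ t, B ≤ wS p t := by
  induction B with
  | zero => exact ⟨0, Nat.zero_le _⟩
  | succ B ih =>
      obtain ⟨t, ht⟩ := ih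
      by_cases h : B + 1 ≤ wS p t
      · exact ⟨t, h⟩
      · have hw : wS p t = B := by omega
        obtain ⟨S, hS⟩ := mS_unbounded hall B
        refine ⟨max t S + 1, ?_⟩
        have h1 : wS p (max t S) ≤ wS p (max t S) := le_refl _
        by_cases h2 : B + 1 ≤ wS p (max t S)
        · exact le_trans h2 (wS_mono p (by omega))
        · have h3 : wS p (max t S) = B := by
            have := wS_mono p (le_max_left t S)
            omega
          rw [wS_succ, h3]
          rw [if_pos (by have := hS (max t S + 1) (by omega); omega)]
lemma zeros_infinite {p : Baire} (hall : ∀ n, n ∈ rangeM p) :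
    {i | Ksort p i = 0}.Infinite := by
  intro hfin
  obtain ⟨N, hN⟩ := hfin.bddAbove
  obtain ⟨t, ht⟩ := wS_unbounded hall (wS p N + 1)
  have htN : N < t := by
    by_contra h
    have := wS_mono p (by omega : t ≤ N)
    omega
  have hsub : (Finset.range (t+1)).filter (fun s => Ksort p s = 0) ⊆
      (Finset.range (N+1)).filter (fun s => Ksort p s = 0) := by
    intro s hs
    rw [Finset.mem_filter] at hs ⊢
    refine ⟨Finset.mem_range.2 ?_, hs.2⟩
    have : s ≤ N := hN hs.2
    omega
  have := Finset.card_le_card hsub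
  rw [Ksort_zeros_card, Ksort_zeros_card] at this
  omega

lemma Ksort_one_of_late {p : Baire} {n₀ S' : ℕ} (hS' : ∀ s, S' ≤ s → wS p s = n₀)
    {i : ℕ} (hi : S' < i) : Ksort p i = 1 := by
  match i, hi with
  | s + 1, hi =>
      show (if wS p s < wS p (s+1) then 0 else 1) = 1
      rw [hS' s (by omega), hS' (s+1) (by omega), if_neg (lt_irrefl _)]

lemma zeros_eq_of_late {p : Baire} {n₀ S' : ℕ} (hS' : ∀ s, S' ≤ s → wS p s = n₀) :
    {i | Ksort p i = 0} = ↑((Finset.range (S'+1)).filter (fun s => Ksort p s = 0)) := by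
  ext i
  simp only [Set.mem_setOf_eq, Finset.coe_filter, Finset.mem_range, Set.mem_setOf_eq]
  constructor
  · intro h
    refine ⟨?_, h⟩
    by_contra h2
    have := Ksort_one_of_late hS' (by omega : S' < i)
    omega
  · exact fun h => h.2

lemma zeros_ncard {p : Baire} {n₀ S' : ℕ} (hS' : ∀ s, S' ≤ s → wS p s = n₀) :
    {i | Ksort p i = 0}.ncard = n₀ + 1 := by
  rw [zeros_eq_of_late hS', Set.ncard_coe_finset, Ksort_zeros_card, hS' S' (le_refl _)]

lemma zeros_finite' {p : Baire} {n₀ S' : ℕ} (hS' : ∀ s, S' ≤ s → wS p s = n₀) :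
    ¬ {i | Ksort p i = 0}.Infinite := by
  rw [zeros_eq_of_late hS']
  exact Set.not_infinite.2 (Set.toFinite _)

lemma sortOut_of_infinite {r : Baire} (h : {i | r i = 0}.Infinite) :
    sortOut r = fun _ => 0 := by
  funext k; simp [sortOut, h]

lemma sortOut_of_finite {r : Baire} (h : ¬ {i | r i = 0}.Infinite) :
    sortOut r = fun k => if k < {i | r i = 0}.ncard then 0 else 1 := by
  funext k; simp [sortOut, h]

open Classical in
noncomputable def Hsort (q : Baire) : Baire := fun n => if q n = 0 ∧ q (n+1) = 1 then 0 else 1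

lemma continuous_Hsort : Continuous Hsort := by
  apply continuous_of_locally
  intro n
  refine ⟨n + 2, fun q q' h => ?_⟩
  unfold Hsort
  rw [h n (by omega), h (n+1) (by omega)]

lemma EC1_sw_SORT : SWRed EC1 SORT := by
  refine ⟨Set.univ, Set.univ, Ksort, Hsort, continuous_Ksort.continuousOn,
    continuous_Hsort.continuousOn, ?_⟩
  intro p hp
  refine ⟨trivial, fun s => Ksort_le_one p s, ?_⟩
  intro q hq
  have hq' : q = sortOut (Ksort p) := hq
  refine ⟨trivial, ?_⟩
  show Hsort q ∈ {chi (rangeM p)}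
  rcases Set.eq_empty_or_nonempty ((rangeM p)ᶜ) with hc | ⟨n₀, hn₀⟩
  · have hall : ∀ n, n ∈ rangeM p := by
      intro n
      by_contra h
      have h2 : n ∈ (rangeM p)ᶜ := h
      rw [hc] at h2
      exact h2
    have hsort := sortOut_of_infinite (zeros_infinite (p := p) hall)
    show Hsort q = chi (rangeM p)
    funext n
    unfold Hsort
    rw [hq', hsort, if_neg (by simp), chi_mem (hall n)]
  · have hc : (rangeM p)ᶜ = {n₀} := by
      have huniq := Set.encard_le_one_iff.1 hp
      ext x
      simp only [Set.mem_singleton_iff]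
      exact ⟨fun hx => huniq x n₀ hx hn₀, fun hx => hx ▸ hn₀⟩
    obtain ⟨S', hS'⟩ := wS_eventually hc
    have hsort := sortOut_of_finite (zeros_finite' hS')
    have hsort2 : sortOut (Ksort p) = fun k => if k < n₀ + 1 then 0 else 1 := by
      rw [hsort, zeros_ncard hS']
    show Hsort q = chi (rangeM p)
    have hrange : rangeM p = {n₀}ᶜ := by
      rw [← hc, compl_compl]
    funext n
    unfold Hsort
    rw [hq', hsort2]
    by_cases hn : n = n₀
    · rw [if_pos (by subst hn; exact ⟨by simp, by simp⟩), hrange,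
        chi_not_mem (by simp [hn])]
    · rw [if_neg (by
        intro hcon
        rcases hcon with ⟨h1, h2⟩
        by_cases h3 : n < n₀ + 1 <;> simp [h3] at h1 h2 <;> omega),
        hrange, chi_mem (by simp [hn])]

-- BLOCK 4 : SORT ≤W RAT
noncomputable def qsum (p : Baire) (s : ℕ) : ℚ :=
  ∑ i ∈ Finset.range s, if p i = 0 then (1 / ((Nat.factorial (i+2) : ℚ))) else 0

noncomputable def Ksr (p : Baire) : Baire := fun s => encodeQ (qsum p s)

noncomputable def fR (p : Baire) (i : ℕ) : ℝ :=
  if p i = 0 then 1 / ((Nat.factorial (i+2) : ℝ)) else 0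

noncomputable def xval (p : Baire) : ℝ := ∑' i, fR p i

lemma two_pow_le_fact (n : ℕ) : 2 ^ (n+1) ≤ Nat.factorial (n+2) := by
  induction n with
  | zero => simp [Nat.factorial]
  | succ n ih =>
      have h1 : Nat.factorial (n+3) = (n+3) * Nat.factorial (n+2) := rfl
      have : 2 ^ (n+2) = 2 * 2 ^ (n+1) := by ring
      rw [this, h1]
      have h2 : 2 * 2 ^ (n+1) ≤ 2 * Nat.factorial (n+2) := by omega
      have h3 : 2 * Nat.factorial (n+2) ≤ (n+3) * Nat.factorial (n+2) :=
        Nat.mul_le_mul_right _ (by omega)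
      omega

lemma fR_nonneg (p : Baire) (i : ℕ) : 0 ≤ fR p i := by
  unfold fR
  split
  · positivity
  · exact le_refl 0

lemma fR_le (p : Baire) (i : ℕ) : fR p i ≤ (1/2 : ℝ) * (1/2)^i := by
  have hf : (2:ℝ) ^ (i+1) ≤ (Nat.factorial (i+2) : ℝ) := by
    exact_mod_cast two_pow_le_fact i
  have hpos : (0:ℝ) < 2 ^ (i+1) := by positivity
  have h2 : 1 / ((Nat.factorial (i+2) : ℝ)) ≤ 1 / 2 ^ (i+1) := by
    apply one_div_le_one_div_of_le hpos hf
  have h3 : (1 / 2 ^ (i+1) : ℝ) = (1/2) * (1/2)^i := by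
    rw [pow_succ]
    field_simp
    rw [← mul_pow]; norm_num
  unfold fR
  split
  · rw [← h3]; exact h2
  · positivity

lemma fR_term_pos (p : Baire) {i : ℕ} (h : p i = 0) :
    0 < fR p i ∧ fR p i = 1 / ((Nat.factorial (i+2) : ℝ)) := by
  unfold fR
  rw [if_pos h]
  constructor
  · positivity
  · rfl

lemma summable_geo_half : Summable (fun i : ℕ => (1/2 : ℝ) * (1/2)^i) :=
  (summable_geometric_of_lt_one (by norm_num) (by norm_num)).mul_left _

lemma summable_fR (p : Baire) : Summable (fR p) :=
  Summable.of_nonneg_of_le (fR_nonneg p) (fR_le p) summable_geo_half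

lemma qsum_cast (p : Baire) (s : ℕ) :
    ((qsum p s : ℚ) : ℝ) = ∑ i ∈ Finset.range s, fR p i := by
  unfold qsum fR
  push_cast [apply_ite (fun q : ℚ => (q : ℝ))]
  rfl

lemma qsum_le_xval (p : Baire) (s : ℕ) :
    ((qsum p s : ℚ) : ℝ) ≤ xval p := by
  rw [qsum_cast]
  exact Summable.sum_le_tsum _ (fun i _ => fR_nonneg p i) (summable_fR p)

lemma qsum_mono (p : Baire) {s t : ℕ} (h : s ≤ t) :
    ((qsum p s : ℚ) : ℝ) ≤ ((qsum p t : ℚ) : ℝ) := by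
  rw [qsum_cast, qsum_cast]
  apply Finset.sum_le_sum_of_subset_of_nonneg
  · exact Finset.range_subset_range.2 h
  · exact fun i _ _ => fR_nonneg p i

lemma qsum_strict (p : Baire) {s i : ℕ} (hsi : s ≤ i) (hz : p i = 0) :
    ((qsum p s : ℚ) : ℝ) + 1 / ((Nat.factorial (i+2) : ℝ)) ≤ ((qsum p (i+1) : ℚ) : ℝ) := by
  have h1 : ((qsum p i : ℚ) : ℝ) + fR p i = ((qsum p (i+1) : ℚ) : ℝ) := by
    rw [qsum_cast, qsum_cast, Finset.sum_range_succ]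
  have h2 := qsum_mono p hsi
  have h3 := (fR_term_pos p hz).2
  rw [← h1, ← h3]
  linarith

lemma tail_bound (p : Baire) (s : ℕ) :
    xval p - ((qsum p s : ℚ) : ℝ) ≤ (1/2 : ℝ)^s := by
  have hsum := summable_fR p
  have hsplit := Summable.sum_add_tsum_nat_add s hsum
  rw [qsum_cast]
  have htail : ∑' i, fR p (i + s) ≤ ∑' i : ℕ, (1/2 : ℝ)^(s+1) * (1/2)^i := by
    apply Summable.tsum_le_tsum
    · intro i
      calc fR p (i + s) ≤ (1/2 : ℝ) * (1/2)^(i+s) := fR_le p (i+s)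
      _ = (1/2 : ℝ)^(s+1) * (1/2)^i := by rw [pow_add]; ring
    · exact (summable_nat_add_iff s).2 hsum
    · exact (summable_geometric_of_lt_one (by norm_num) (by norm_num)).mul_left _
  have hgeo : ∑' i : ℕ, (1/2 : ℝ)^(s+1) * (1/2)^i = (1/2 : ℝ)^s := by
    rw [tsum_mul_left, tsum_geometric_of_lt_one (by norm_num) (by norm_num)]
    rw [pow_succ]
    ring
  have hx : xval p = (∑ i ∈ Finset.range s, fR p i) + ∑' i, fR p (i + s) := by
    rw [hsplit]; rfl
  rw [hx]
  have h5 := htail.trans (le_of_eq hgeo)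
  linarith

lemma rho_Ksr (p : Baire) : rhoCauchy (Ksr p) (xval p) := by
  intro s
  unfold Ksr
  rw [encodeQ_spec, half_pow]
  have h1 := tail_bound p s
  have h2 := qsum_le_xval p s
  rw [abs_sub_comm, abs_of_nonneg (by linarith)]
  linarith

lemma xval_of_finite {p : Baire} {s₀ : ℕ} (h : ∀ i, s₀ ≤ i → p i ≠ 0) :
    xval p = ((qsum p s₀ : ℚ) : ℝ) := by
  rw [qsum_cast]
  apply tsum_eq_sum
  intro i hi
  have : s₀ ≤ i := by
    by_contra h2
    exact hi (Finset.mem_range.2 (by omega))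
  unfold fR
  rw [if_neg (h i this)]

lemma continuous_Ksr : Continuous Ksr := by
  apply continuous_of_locally
  intro s
  refine ⟨s, fun p p' h => ?_⟩
  unfold Ksr qsum
  congr 1
  apply Finset.sum_congr rfl
  intro i hi
  rw [h i (Finset.mem_range.1 hi)]

lemma sortOut_congr {p p' : Baire} (h : {i | p' i = 0} = {i | p i = 0}) :
    sortOut p' = sortOut p := by
  classical
  funext k
  have h1 : {i | p' i = 0}.Infinite ↔ {i | p i = 0}.Infinite := by rw [h]
  have h2 : {i | p' i = 0}.ncard = {i | p i = 0}.ncard := by rw [h]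
  simp only [sortOut]
  exact if_congr h1 rfl (if_congr (by rw [h2]) rfl rfl)

lemma sortOut_zero_of_many {p' : Baire} {m t : ℕ}
    (h : m + 1 ≤ ((Finset.range t).filter (fun i => p' i = 0)).card) :
    sortOut p' m = 0 := by
  by_cases hinf : {i | p' i = 0}.Infinite
  · rw [sortOut_of_infinite hinf]
  · have h2beta := congrFun (sortOut_of_finite hinf) m
    have hsub : ↑((Finset.range t).filter (fun i => p' i = 0)) ⊆ {i | p' i = 0} := by
      intro i hi
      simp only [Finset.coe_filter, Set.mem_setOf_eq] at hi
      exact hi.2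
    have hcard : ((Finset.range t).filter (fun i => p' i = 0)).card ≤
        {i | p' i = 0}.ncard := by
      rw [← Set.ncard_coe_finset]
      exact Set.ncard_le_ncard hsub (Set.not_infinite.1 hinf)
    rw [h2beta, if_pos (by omega)]

lemma SORT_w_RAT : WRed SORT RAT := by
  classical
  refine ⟨Set.univ,
    {r | pfst r ∈ SORT.dom ∧ psnd r ∈ RAT.sol (Ksr (pfst r))},
    Ksr, fun r => sortOut (pfst r),
    continuous_Ksr.continuousOn, ?_, ?_⟩
  · -- continuity of H on Hd
    apply continuousOn_of_locally
    intro r hr m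
    obtain ⟨hdom, x, hx, hcase⟩ := hr
    have hxval : x = xval (pfst r) := rhoCauchy_unique hx (rho_Ksr (pfst r))
    by_cases hinf : {i | pfst r i = 0}.Infinite
    · -- infinite zeros
      obtain ⟨Z', hZ'sub, hZ'fin, hZ'card⟩ := hinf.exists_subset_ncard_eq (m+1)
      obtain ⟨N, hN⟩ := hZ'fin.bddAbove
      have hmany : m + 1 ≤ ((Finset.range (N+1)).filter (fun i => pfst r i = 0)).card := by
        rw [← hZ'card, ← Set.ncard_coe_finset]
        apply Set.ncard_le_ncard
        · intro i hi
          simp only [Finset.coe_filter, Set.mem_setOf_eq, Finset.mem_range]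
          exact ⟨by have := hN hi; omega, hZ'sub hi⟩
        · exact Set.toFinite _
      refine ⟨2 * (N+1), fun r' hr' hagree => ?_⟩
      have hpp : ∀ i < N + 1, pfst r' i = pfst r i := by
        intro i hi
        exact hagree (2*i) (by omega)
      have hmany' : m + 1 ≤
          ((Finset.range (N+1)).filter (fun i => pfst r' i = 0)).card := by
        have he : (Finset.range (N+1)).filter (fun i => pfst r' i = 0) =
            (Finset.range (N+1)).filter (fun i => pfst r i = 0) := by
          apply Finset.filter_congr
          intro i hi
          rw [hpp i (Finset.mem_range.1 hi)]
        rw [he]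
        exact hmany
      rw [sortOut_zero_of_many hmany', sortOut_zero_of_many hmany]
    · -- finitely many zeros
      obtain ⟨N, hN⟩ := (Set.not_infinite.1 hinf).bddAbove
      have hnz : ∀ i, N + 1 ≤ i → pfst r i ≠ 0 := by
        intro i hi hz
        have := hN (show i ∈ {j | pfst r j = 0} from hz)
        omega
      have hxq : x = ((qsum (pfst r) (N+1) : ℚ) : ℝ) := by
        rw [hxval, xval_of_finite hnz]
      rcases hcase with ⟨n, hxn, hq⟩ | ⟨hirr,ical⟩
      swap
      · exact absurd hxq (hirr (qsum (pfst r) (N+1)))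
      refine ⟨max (2 * (N+1)) (2 * n + 2), fun r' hr' hagree => ?_⟩
      have hpp : ∀ i < N+1, pfst r' i = pfst r i := by
        intro i hi
        exact hagree (2*i) (by omega)
      have hqq : ∀ i ≤ n, psnd r' i = psnd r i := by
        intro i hi
        exact hagree (2*i+1) (by omega)
      obtain ⟨hdom', x', hx', hcase'⟩ := hr'
      have hx'val : x' = xval (pfst r') := rhoCauchy_unique hx' (rho_Ksr (pfst r'))
      have hq'n : psnd r' n = 1 := by
        rw [hqq n (le_refl n), hq]
        simp [znk]
      rcases hcase' with ⟨n', hxn', hq'⟩ | ⟨notrat, hq'⟩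
      swap
      · rw [hq'] at hq'n
        simp at hq'n
      have hnn : n' = n := by
        rcases lt_trichotomy n' n with h | h | h
        · have h1 : psnd r' n' = 1 := by rw [hq']; simp [znk]
          have h2 : psnd r' n' = 0 := by
            rw [hqq n' (by omega), hq]
            simp [znk, h]
          omega
        · exact h
        · rw [hq'] at hq'n
          simp [znk, h] at hq'n
      have hx'x : x' = x := by
        rw [hxn', hnn, ← hxn]
      have hq's : ((qsum (pfst r') (N+1) : ℚ) : ℝ) = x' := by
        have he : qsum (pfst r') (N+1) = qsum (pfst r) (N+1) := by
          unfold qsum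
          apply Finset.sum_congr rfl
          intro i hi
          rw [hpp i (Finset.mem_range.1 hi)]
        rw [he, hx'x, hxq]
      have hnz' : ∀ i, N+1 ≤ i → pfst r' i ≠ 0 := by
        intro i hi hz
        have h1 := qsum_strict (pfst r') hi hz
        have h2 := qsum_le_xval (pfst r') (i+1)
        have h3 : (0:ℝ) < 1 / ((Nat.factorial (i+2) : ℝ)) := by positivity
        rw [← hx'val] at h2
        rw [hq's] at h1
        linarith
      have hsets : {i | pfst r' i = 0} = {i | pfst r i = 0} := by
        ext i
        simp only [Set.mem_setOf_eq]
        by_cases hi : i < N+1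
        · rw [hpp i hi]
        · constructor
          · intro h; exact absurd h (hnz' i (by omega))
          · intro h; exact absurd h (hnz i (by omega))
      rw [sortOut_congr hsets]
  · -- the reduction conditions
    intro p hp
    refine ⟨trivial, ⟨xval p, rho_Ksr p⟩, fun q hq => ?_⟩
    constructor
    · constructor
      · rw [pfst_pairB]; exact hp
      · rw [pfst_pairB, psnd_pairB]; exact hq
    · show sortOut (pfst (pairB p q)) ∈ SORT.sol p
      rw [pfst_pairB]; rfl

/-- `EC₁ ≡_W RAT ≡_W SORT`; in fact `RAT ≤_sW EC₁ ≤_sW SORT ≤_W RAT`. -/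
theorem EC1_RAT_SORT :
    (WEquiv EC1 RAT ∧ WEquiv RAT SORT) ∧
    SWRed RAT EC1 ∧ SWRed EC1 SORT ∧ WRed SORT RAT := by
  have w1 : WRed RAT EC1 := RAT_sw_EC1.toW
  have w2 : WRed EC1 SORT := EC1_sw_SORT.toW
  exact ⟨⟨⟨w2.trans SORT_w_RAT, w1⟩, ⟨w1.trans w2, SORT_w_RAT⟩⟩,
    RAT_sw_EC1, EC1_sw_SORT, SORT_w_RAT⟩
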